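/- Let G be a connected plane graph with minimum degree at least 3 that contains no cycle of length 4, no cycle of length 7, no cycle of length 9, and no 5-cycle normally adjacent to a 3-cycle. Then every face of G that is adjacent to a 3-face has boundary walk of length at least 10. -/

import Mathlib

namespace Paper

open SimpleGraph

variable {V : Type*}

/-- The fixed-point-free involution on darts reversing each dart. -/
def dartFlip (G : SimpleGraph V) : Equiv.Perm G.Dart :=
  ⟨SimpleGraph.Dart.symm, SimpleGraph.Dart.symm,
    fun d => SimpleGraph.Dart.symm_symm d, fun d => SimpleGraph.Dart.symm_symm d⟩

/-- A combinatorial embedding (rotation system) of a simple graph: a permutation of the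
darts whose cycles are exactly the sets of darts emanating from a common vertex. -/
structure PlaneEmbedding (G : SimpleGraph V) where
  rot : Equiv.Perm G.Dart
  fst_rot : ∀ d : G.Dart, (rot d).fst = d.fst
  rot_cyclic : ∀ d e : G.Dart, d.fst = e.fst → rot.SameCycle d e

/-- The face permutation of a combinatorial embedding; its orbits are the (boundary walks
of the) faces of the embedding. -/
def PlaneEmbedding.facePerm {G : SimpleGraph V} (E : PlaneEmbedding G) : Equiv.Perm G.Dart :=
  E.rot * dartFlip G

/-- The face (as its set of boundary darts, i.e. the orbit of the face permutation)
containing a given dart. -/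
def faceOf {G : SimpleGraph V} (E : PlaneEmbedding G) (d : G.Dart) : Set G.Dart :=
  {e | E.facePerm.SameCycle d e}

/-- The length of the boundary walk of the face containing a given dart; a `k`-face is a
face whose boundary walk has length `k`, i.e. whose dart-orbit has size `k`. -/
noncomputable def faceSize {G : SimpleGraph V} (E : PlaneEmbedding G) (d : G.Dart) : ℕ :=
  (faceOf E d).ncard

/-- The number of faces of the embedding lying in a given connected component. -/
noncomputable def componentFaceCount {G : SimpleGraph V} (E : PlaneEmbedding G)
    (c : G.ConnectedComponent) : ℕ :=
  Nat.card (Quotient (Setoid.comap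
    (Subtype.val : {d : G.Dart // G.connectedComponentMk d.fst = c} → G.Dart)
    (Equiv.Perm.SameCycle.setoid E.facePerm)))

/-- The embedding is plane (genus zero): Euler's formula `V - E + F = 2` holds on each
connected component containing an edge (stated as `2V + 2F = #darts + 4`, using that the
number of darts is twice the number of edges). -/
def PlaneEmbedding.IsPlane {G : SimpleGraph V} (E : PlaneEmbedding G) : Prop :=
  ∀ c : G.ConnectedComponent, (∃ d : G.Dart, G.connectedComponentMk d.fst = c) →
    2 * {v : V | G.connectedComponentMk v = c}.ncard + 2 * componentFaceCount E c
      = {d : G.Dart | G.connectedComponentMk d.fst = c}.ncard + 4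

/-- `G` is a planar graph: it admits a plane (genus-zero) combinatorial embedding. -/
def IsPlanar (G : SimpleGraph V) : Prop :=
  ∃ E : PlaneEmbedding G, E.IsPlane

/-- `G` has no cycle of length `n`. -/
def NoCycleLen (G : SimpleGraph V) (n : ℕ) : Prop :=
  ∀ (v : V) (c : G.Walk v v), c.IsCycle → c.length ≠ n

/-- Two cycles (given as closed walks) are normally adjacent: their intersection is
isomorphic to `K₂`, i.e. they share exactly one edge together with its two endpoints. -/
def NormAdjWalks (G : SimpleGraph V) {a b : V} (c₁ : G.Walk a a) (c₂ : G.Walk b b) : Prop :=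
  ∃ x y : V, x ≠ y ∧ s(x, y) ∈ c₁.edges ∧ s(x, y) ∈ c₂.edges ∧
    (∀ z : V, (z ∈ c₁.support ∧ z ∈ c₂.support) ↔ (z = x ∨ z = y))

/-- `G` has no `5`-cycle normally adjacent to a `3`-cycle. -/
def No5CycleNormAdj3 (G : SimpleGraph V) : Prop :=
  ∀ (a b : V) (c₁ : G.Walk a a) (c₂ : G.Walk b b),
    c₁.IsCycle → c₁.length = 5 → c₂.IsCycle → c₂.length = 3 →
      ¬ NormAdjWalks G c₁ c₂

/-- `d` lists the boundary darts of a face in order, and this boundary is the closed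
walk `v 0, v 1, …, v (n-1), v 0`. -/
def FaceTraversal {G : SimpleGraph V} (E : PlaneEmbedding G) {n : ℕ}
    (v : ZMod n → V) (d : ZMod n → G.Dart) : Prop :=
  (∀ i, (d i).toProd = (v i, v (i + 1))) ∧ ∀ i, E.facePerm (d i) = d (i + 1)

/-- The cycle `v 0, v 1, …, v (n-1), v 0` (with distinct vertices) bounds a face of the
embedding (traversed in one of the two possible directions). -/
def CycleBoundsFace {G : SimpleGraph V} (E : PlaneEmbedding G) {n : ℕ}
    (v : ZMod n → V) : Prop :=
  Function.Injective v ∧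
    ((∃ d, FaceTraversal E v d) ∨ (∃ d, FaceTraversal E (fun i => v (-i)) d))

/-- The `i`-th vertex of the boundary walk of the face containing the dart `d0`. -/
def boundaryVert {G : SimpleGraph V} (E : PlaneEmbedding G) (d0 : G.Dart) (i : ℕ) : V :=
  ((E.facePerm ^ i) d0).fst

/-- The faces containing the darts `d1`, `d2` are adjacent: their boundaries share at
least one edge. -/
def FacesAdjacent {G : SimpleGraph V} (E : PlaneEmbedding G) (d1 d2 : G.Dart) : Prop :=
  ∃ e1 e2 : G.Dart, E.facePerm.SameCycle d1 e1 ∧ E.facePerm.SameCycle d2 e2 ∧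
    e1.edge = e2.edge

/-- The set of vertices on the boundary of the face containing the dart `d`. -/
def faceVerts {G : SimpleGraph V} (E : PlaneEmbedding G) (d : G.Dart) : Set V :=
  {x | ∃ e : G.Dart, E.facePerm.SameCycle d e ∧ e.fst = x}

/-- The set of edges on the boundary of the face containing the dart `d`. -/
def faceEdges {G : SimpleGraph V} (E : PlaneEmbedding G) (d : G.Dart) : Set (Sym2 V) :=
  {s | ∃ e : G.Dart, E.facePerm.SameCycle d e ∧ e.edge = s}

section Configs

variable [Fintype V]

/-- Configuration (1): a `10`-cycle bounding a face together with a `3`-cycle bounding a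
face, normally adjacent to it along one edge, all eleven vertices having degree `3`. -/
def Config1 (G : SimpleGraph V) [DecidableRel G.Adj] (E : PlaneEmbedding G) : Prop :=
  ∃ (v : ZMod 10 → V) (w : ZMod 3 → V) (u : V),
    CycleBoundsFace E v ∧ CycleBoundsFace E w ∧
    ({w 0, w 1, w 2} : Set V) = {v 0, v 1, u} ∧ u ∉ Set.range v ∧
    (∀ i, G.degree (v i) = 3) ∧ G.degree u = 3

/-- Configuration (2): two vertex-disjoint `10`-cycles `x₁…x₁₀` and `y₁…y₁₀` (indexed here
from `0`), each bounding a face, with edges `x₃y₃` and `x₁₀y₁₀`; all `xᵢ` have degree `3`,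
`y₃` and `y₁₀` have degree `4`, the other `yᵢ` have degree `3`. -/
def Config2 (G : SimpleGraph V) [DecidableRel G.Adj] (E : PlaneEmbedding G) : Prop :=
  ∃ x y : ZMod 10 → V,
    CycleBoundsFace E x ∧ CycleBoundsFace E y ∧
    Set.range x ∩ Set.range y = ∅ ∧
    G.Adj (x 2) (y 2) ∧ G.Adj (x 9) (y 9) ∧
    (∀ i, G.degree (x i) = 3) ∧
    G.degree (y 2) = 4 ∧ G.degree (y 9) = 4 ∧
    (∀ i, i ≠ 2 → i ≠ 9 → G.degree (y i) = 3)

/-- Configuration (3): an `8`-cycle bounding a face and a `5`-cycle bounding a face that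
are normally adjacent (sharing exactly one edge and its endpoints), all eleven vertices
having degree `3`. -/
def Config3 (G : SimpleGraph V) [DecidableRel G.Adj] (E : PlaneEmbedding G) : Prop :=
  ∃ (a : ZMod 8 → V) (b : ZMod 5 → V),
    CycleBoundsFace E a ∧ CycleBoundsFace E b ∧
    Set.range a ∩ Set.range b = {a 0, a 1} ∧
    (∃ j : ZMod 5, (b j = a 0 ∧ b (j + 1) = a 1) ∨ (b j = a 1 ∧ b (j + 1) = a 0)) ∧
    (∀ i, G.degree (a i) = 3) ∧ (∀ j, G.degree (b j) = 3)

end Configs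

open Classical in
/-- The function resulting from the operation `Delete_[u](G, f)`: every neighbour of `u`
loses one unit. -/
noncomputable def deleteFun (G : SimpleGraph V) (u : V) (f : V → ℤ) : V → ℤ :=
  fun v => if G.Adj u v then f v - 1 else f v

open Classical in
/-- The function resulting from the operation `DeleteSave_[u; w](G, f)`: every neighbour
of `u` except `w` loses one unit. -/
noncomputable def deleteSaveFun (G : SimpleGraph V) (u w : V) (f : V → ℤ) : V → ℤ :=
  fun v => if G.Adj u v ∧ v ≠ w then f v - 1 else f v

/-- All vertices of the subgraph of `G` induced on `S` can be removed by a sequence of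
legal applications of the `Delete` and `DeleteSave` operations, starting from the value
function `f`. -/
inductive WeaklyReducible (G : SimpleGraph V) : Set V → (V → ℤ) → Prop
  | empty (f : V → ℤ) : WeaklyReducible G ∅ f
  | delete (S : Set V) (f : V → ℤ) (u : V) (hu : u ∈ S)
      (hnn : ∀ v ∈ S \ {u}, 0 ≤ deleteFun G u f v)
      (h : WeaklyReducible G (S \ {u}) (deleteFun G u f)) : WeaklyReducible G S f
  | deleteSave (S : Set V) (f : V → ℤ) (u w : V) (hu : u ∈ S) (hw : w ∈ S \ {u})
      (hadj : G.Adj u w) (hlt : f w < f u)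
      (hnn : ∀ v ∈ S \ {u}, 0 ≤ deleteSaveFun G u w f v)
      (h : WeaklyReducible G (S \ {u}) (deleteSaveFun G u w f)) : WeaklyReducible G S f

/-- `G` is weakly `d`-degenerate: all its vertices can be removed by a sequence of legal
applications of the `Delete` and `DeleteSave` operations, starting from the constant
function of value `d`. -/
def WeaklyDegenerate (G : SimpleGraph V) (d : ℤ) : Prop :=
  WeaklyReducible G Set.univ (fun _ => d)

/-- The canonical cover of `G` with `s = 2`: two disjoint copies of `G`, on vertex set
`V × Fin 2`, with `(u, i)` adjacent to `(v, j)` iff `uv ∈ E(G)` and `i = j`. -/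
def canonicalCover2 (G : SimpleGraph V) : SimpleGraph (V × Fin 2) where
  Adj a b := G.Adj a.1 b.1 ∧ a.2 = b.2
  symm := ⟨fun _ _ h => ⟨h.1.symm, h.2.symm⟩⟩
  loopless := ⟨fun a h => h.1.ne rfl⟩

/-- `T` is a strictly `f`-degenerate transversal-candidate set: every nonempty subgraph
`K` of the induced subgraph `H[T]` has a vertex `x` with `deg_K x < f x`. -/
def StrictlyFDegenerateOn {W : Type*} (H : SimpleGraph W) (f : W → ℕ) (T : Set W) : Prop :=
  ∀ K : H.Subgraph, K.verts ⊆ T → K.verts.Nonempty →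
    ∃ x ∈ K.verts, Nat.card (K.neighborSet x) < f x

end Paper

open SimpleGraph


section Aux
open SimpleGraph Paper

variable {V : Type*} {G : SimpleGraph V} (E : Paper.PlaneEmbedding G)

lemma fP_def (e : G.Dart) : E.facePerm e = E.rot e.symm := rfl

lemma fst_fP (e : G.Dart) : (E.facePerm e).fst = e.snd := by
  rw [fP_def, E.fst_rot]; rfl

variable [Fintype V] [DecidableRel G.Adj] [DecidableEq V]

lemma rot_two_cycle (E : Paper.PlaneEmbedding G) {e f : G.Dart}
    (h1 : E.rot e = f) (h2 : E.rot f = e) :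
    ∀ n : ℕ, (E.rot ^ n) e = e ∨ (E.rot ^ n) e = f := by
  intro n
  induction n with
  | zero => left; rfl
  | succ n ih =>
    rw [pow_succ', Equiv.Perm.mul_apply]
    rcases ih with h | h <;> rw [h]
    · right; exact h1
    · left; exact h2

lemma no_pinch (hmin : ∀ v : V, 3 ≤ G.degree v) {e f : G.Dart}
    (hef : e.fst = f.fst) (h1 : E.rot e = f) (h2 : E.rot f = e) : False := by
  have hcard : ({e.snd, f.snd} : Finset V).card < (G.neighborFinset e.fst).card := by
    calc ({e.snd, f.snd} : Finset V).card ≤ 2 := by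
          apply (Finset.card_insert_le _ _).trans; simp
    _ < 3 := by norm_num
    _ ≤ (G.neighborFinset e.fst).card := by
          rw [SimpleGraph.card_neighborFinset_eq_degree]; exact hmin _
  have hns : ¬ (G.neighborFinset e.fst ⊆ ({e.snd, f.snd} : Finset V)) := by
    intro hsub
    exact absurd (Finset.card_le_card hsub) (not_le.2 hcard)
  obtain ⟨w, hw, hw2⟩ := Finset.not_subset.1 hns
  · have hadj : G.Adj e.fst w := by rwa [SimpleGraph.mem_neighborFinset] at hw
    set g : G.Dart := ⟨(e.fst, w), hadj⟩ with hg
    have hsc : E.rot.SameCycle e g := E.rot_cyclic e g rfl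
    obtain ⟨i, _, hi⟩ := hsc.exists_pow_eq'
    rcases rot_two_cycle E h1 h2 i with h | h <;> rw [hi] at h
    · apply hw2; rw [← h]; simp [hg]
    · apply hw2; rw [← h]; simp [hg]

lemma no_spur (hmin : ∀ v : V, 3 ≤ G.degree v) (e : G.Dart) :
    E.facePerm e ≠ e.symm := by
  intro h
  rw [fP_def] at h
  exact no_pinch E hmin rfl h h

lemma no_gap2 (hmin : ∀ v : V, 3 ≤ G.degree v) (e : G.Dart) :
    (E.facePerm (E.facePerm e)).fst ≠ e.fst := by
  intro h
  apply no_spur E hmin e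
  apply SimpleGraph.Dart.ext
  have h1 : (E.facePerm e).fst = e.snd := fst_fP E e
  have h2 : (E.facePerm (E.facePerm e)).fst = (E.facePerm e).snd := fst_fP E _
  rw [h] at h2
  exact Prod.ext h1 h2.symm


noncomputable def fM (E : Paper.PlaneEmbedding G) (d : G.Dart) : ℕ :=
  Function.minimalPeriod (⇑E.facePerm) d

lemma fM_pos (d : G.Dart) : 0 < fM E d := by
  apply Function.IsPeriodicPt.minimalPeriod_pos (orderOf_pos E.facePerm)
  show (⇑E.facePerm)^[orderOf E.facePerm] d = d
  rw [← Equiv.Perm.coe_pow, pow_orderOf_eq_one]; rfl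

lemma pow_fM_apply (d : G.Dart) : (E.facePerm ^ (fM E d)) d = d := by
  rw [Equiv.Perm.coe_pow]; exact Function.iterate_minimalPeriod

lemma pow_mod_fM (d : G.Dart) (n : ℕ) :
    (E.facePerm ^ (n % fM E d)) d = (E.facePerm ^ n) d := by
  rw [Equiv.Perm.coe_pow, Equiv.Perm.coe_pow]
  exact Function.iterate_mod_minimalPeriod_eq

lemma fM_injOn (d : G.Dart) {i j : ℕ} (hi : i < fM E d) (hj : j < fM E d)
    (h : (E.facePerm ^ i) d = (E.facePerm ^ j) d) : i = j := by
  apply Function.iterate_injOn_Iio_minimalPeriod hi hj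
  show (⇑E.facePerm)^[i] d = (⇑E.facePerm)^[j] d
  rwa [← Equiv.Perm.coe_pow, ← Equiv.Perm.coe_pow]

lemma sameCycle_iff_pow (d e : G.Dart) :
    E.facePerm.SameCycle d e ↔ ∃ i < fM E d, (E.facePerm ^ i) d = e := by
  constructor
  · intro h
    obtain ⟨i, _, hi⟩ := h.exists_pow_eq'
    exact ⟨i % fM E d, Nat.mod_lt _ (fM_pos E d), by rw [pow_mod_fM]; exact hi⟩
  · rintro ⟨i, _, hi⟩
    exact ⟨(i : ℤ), by rw [zpow_natCast]; exact hi⟩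

lemma faceOf_eq_image (d : G.Dart) :
    Paper.faceOf E d = (fun i => (E.facePerm ^ i) d) '' Set.Iio (fM E d) := by
  ext e
  constructor
  · intro h
    obtain ⟨i, hi, h2⟩ := (sameCycle_iff_pow E d e).1 h
    exact ⟨i, hi, h2⟩
  · rintro ⟨i, hi, rfl⟩
    exact ⟨(i : ℤ), by rw [zpow_natCast]⟩

lemma faceSize_eq_fM (d : G.Dart) : Paper.faceSize E d = fM E d := by
  rw [Paper.faceSize, faceOf_eq_image]
  rw [Set.ncard_image_of_injOn]
  · rw [← Finset.coe_range, Set.ncard_coe_finset, Finset.card_range]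
  · intro i hi j hj h
    exact fM_injOn E d hi hj h

lemma faceSize_congr {d e : G.Dart} (h : E.facePerm.SameCycle d e) :
    Paper.faceSize E d = Paper.faceSize E e := by
  unfold Paper.faceSize Paper.faceOf
  congr 1
  ext f
  exact ⟨fun hf => (h.symm).trans hf, fun hf => h.trans hf⟩

lemma mem_face_pow (d : G.Dart) (i : ℕ) : E.facePerm.SameCycle d ((E.facePerm ^ i) d) :=
  ⟨(i : ℤ), by rw [zpow_natCast]⟩


def fWalk (E : Paper.PlaneEmbedding G) : (e : G.Dart) → (k : ℕ) → G.Walk e.fst ((E.facePerm ^ k) e).fst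
  | _, 0 => SimpleGraph.Walk.nil
  | e, (k+1) =>
      SimpleGraph.Walk.cons e.adj ((fWalk E (E.facePerm e) k).copy (fst_fP E e)
        (congrArg (fun d : G.Dart => d.fst)
          (show (E.facePerm ^ k) (E.facePerm e) = (E.facePerm ^ (k+1)) e by
            rw [← Equiv.Perm.mul_apply, ← pow_succ])))

lemma fWalk_length (e : G.Dart) (k : ℕ) : (fWalk E e k).length = k := by
  induction k generalizing e with
  | zero => rfl
  | succ k ih =>
    rw [fWalk, SimpleGraph.Walk.length_cons, SimpleGraph.Walk.length_copy, ih]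

lemma fWalk_darts (e : G.Dart) (k : ℕ) :
    (fWalk E e k).darts = (List.range k).map (fun i => (E.facePerm ^ i) e) := by
  induction k generalizing e with
  | zero => rfl
  | succ k ih =>
    rw [fWalk, SimpleGraph.Walk.darts_cons, SimpleGraph.Walk.darts_copy, ih,
      List.range_succ_eq_map, List.map_cons, List.map_map]
    refine congrArg₂ List.cons rfl ?_
    refine List.map_congr_left (fun i _ => ?_)
    show (E.facePerm ^ i) (E.facePerm e) = (E.facePerm ^ (i + 1)) e
    rw [← Equiv.Perm.mul_apply, ← pow_succ]

lemma fWalk_support (e : G.Dart) (k : ℕ) :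
    (fWalk E e k).support = (List.range (k+1)).map (fun i => ((E.facePerm ^ i) e).fst) := by
  induction k generalizing e with
  | zero => rfl
  | succ k ih =>
    rw [fWalk, SimpleGraph.Walk.support_cons, SimpleGraph.Walk.support_copy, ih]
    rw [List.range_succ_eq_map (n := k+1), List.map_cons, List.map_map]
    refine congrArg₂ List.cons rfl ?_
    refine List.map_congr_left (fun i _ => ?_)
    show ((E.facePerm ^ i) (E.facePerm e)).fst = ((E.facePerm ^ (i + 1)) e).fst
    rw [← Equiv.Perm.mul_apply, ← pow_succ]

lemma mem_edges_iff {u v : V} (p : G.Walk u v) (s : Sym2 V) :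
    s ∈ p.edges ↔ ∃ d ∈ p.darts, d.edge = s := by
  show s ∈ p.darts.map SimpleGraph.Dart.edge ↔ _
  rw [List.mem_map]


open SimpleGraph.Walk in
lemma triangle_isCycle {a b c : V} (hab : G.Adj a b) (hbc : G.Adj b c) (hca : G.Adj c a) :
    (cons hab (cons hbc (cons hca nil))).IsCycle := by
  rw [cons_isCycle_iff]
  refine ⟨?_, ?_⟩ <;>
    simp [cons_isPath_iff, Sym2.eq_iff, hab.ne, hab.ne', hbc.ne, hbc.ne', hca.ne, hca.ne']

open SimpleGraph.Walk in
lemma quad_isCycle {a b c d : V} (hab : G.Adj a b) (hbc : G.Adj b c) (hcd : G.Adj c d)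
    (hda : G.Adj d a) (hac : a ≠ c) (hbd : b ≠ d) :
    (cons hab (cons hbc (cons hcd (cons hda nil)))).IsCycle := by
  rw [cons_isCycle_iff]
  refine ⟨?_, ?_⟩ <;>
    simp [cons_isPath_iff, Sym2.eq_iff, hab.ne, hab.ne', hbc.ne, hbc.ne', hcd.ne, hcd.ne',
      hda.ne, hda.ne', hac, hac.symm, hbd, hbd.symm]

open SimpleGraph.Walk in
lemma path_edge_ends {u v : V} (p : G.Walk u v) (hp : p.IsPath) (he : s(u, v) ∈ p.edges) :
    p.length = 1 := by
  induction p with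
  | nil => simp at he
  | @cons u w v h q ih =>
    rw [edges_cons, List.mem_cons] at he
    rcases he with he | he
    · rw [Sym2.eq_iff] at he
      rcases he with ⟨-, rfl⟩ | ⟨rfl, -⟩
      · rw [cons_isPath_iff] at hp
        have : q = nil := (isPath_iff_eq_nil (p := q)).1 hp.1
        rw [this]; rfl
      · exact absurd rfl h.ne
    · rw [cons_isPath_iff] at hp
      exact absurd (q.fst_mem_support_of_mem_edges he) hp.2

lemma pinch' (hmin : ∀ v : V, 3 ≤ G.degree v) {a b : G.Dart}
    (h1 : E.facePerm a = b) (h2 : E.facePerm b.symm = a.symm) : False := by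
  rw [fP_def] at h1 h2
  rw [SimpleGraph.Dart.symm_symm] at h2
  refine no_pinch E hmin (e := a.symm) (f := b) ?_ h1 h2
  show a.snd = b.fst
  rw [← h1, E.fst_rot]
  rfl


open SimpleGraph.Walk in
lemma edge_mem_of_length_one {u v : V} (p : G.Walk u v) (h : p.length = 1) :
    s(u, v) ∈ p.edges := by
  cases p with
  | nil => simp at h
  | @cons _ w _ hadj q =>
    rw [length_cons] at h
    have h0 : q.length = 0 := by omega
    have hv := q.eq_of_length_eq_zero h0
    subst hv
    rw [edges_cons]
    exact List.mem_cons_self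

open SimpleGraph.Walk in
lemma engine (hmin : ∀ v : V, 3 ≤ G.degree v)
    (h4 : Paper.NoCycleLen G 4) (h7 : Paper.NoCycleLen G 7)
    (h9 : Paper.NoCycleLen G 9) (h53 : Paper.No5CycleNormAdj3 G)
    (e1 : G.Dart) (h3 : fM E e1 = 3)
    (hdisj : ¬ E.facePerm.SameCycle e1 e1.symm)
    (hm : fM E e1.symm ≤ 9) : False := by
  set F := E.facePerm with hF
  set x := e1.fst with hx
  set y := e1.snd with hy
  set A1 := F e1 with hA1
  set A2 := F A1 with hA2
  have hA1f : A1.fst = y := fst_fP E e1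
  set z := A1.snd with hz
  have hA2f : A2.fst = z := fst_fP E A1
  have hpow2 : (F ^ 2) e1 = A2 := by
    rw [pow_succ, pow_one, Equiv.Perm.mul_apply]
  have hpow3 : (F ^ 3) e1 = e1 := by rw [← h3]; exact pow_fM_apply E e1
  have hFA2 : F A2 = e1 := by
    have h32 : (F ^ 3) e1 = F A2 := by
      rw [pow_succ', Equiv.Perm.mul_apply, hpow2]
    rw [← h32, hpow3]
  have hA2s : A2.snd = x := by
    have h := fst_fP E A2
    rw [hFA2] at h
    exact h.symm
  have hxy : G.Adj x y := e1.adj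
  have hyz : G.Adj y z := by have := A1.adj; rwa [hA1f] at this
  have hzx : G.Adj z x := by have := A2.adj; rwa [hA2f, hA2s] at this
  have hxz : x ≠ z := fun h => no_gap2 E hmin e1 (by rw [← hA2, ← hA1] at *; rw [hA2f, ← h])
  set e2 := e1.symm with he2
  have hc0f : e2.fst = y := rfl
  have hc0s : e2.snd = x := rfl
  have hsucc : ∀ i : ℕ, (F ^ (i+1)) e2 = F ((F ^ i) e2) := by
    intro i; rw [pow_succ', Equiv.Perm.mul_apply]
  have hsucc1 : ∀ i : ℕ, (F ^ i) (F e2) = (F ^ (i+1)) e2 := by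
    intro i; rw [pow_succ, Equiv.Perm.mul_apply]
  have no_common : ∀ i j : ℕ, (F ^ i) e2 ≠ (F ^ j) e1 := by
    intro i j h
    apply hdisj
    have h1 : F.SameCycle e1 ((F ^ j) e1) := mem_face_pow E e1 j
    have h2 : F.SameCycle e2 ((F ^ i) e2) := mem_face_pow E e2 i
    rw [h] at h2
    exact h1.trans h2.symm
  have pinch1 : F e2 ≠ A2.symm := fun h => pinch' E hmin hFA2 h
  have pinch2 : F A2.symm ≠ A1.symm := fun h => pinch' E hmin rfl h
  have pinch3 : F A1.symm ≠ e2 := fun h => pinch' E hmin rfl h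
  set m := fM E e2 with hmdef
  have hm1 : 1 ≤ m := fM_pos E e2
  set c : ℕ → V := fun i => ((F ^ i) e2).fst with hc
  have hc_snd : ∀ i : ℕ, c (i+1) = ((F ^ i) e2).snd := by
    intro i
    show ((F ^ (i+1)) e2).fst = _
    rw [hsucc i]
    exact fst_fP E _
  have hc_adj : ∀ i : ℕ, G.Adj (c i) (c (i+1)) := by
    intro i
    rw [hc_snd i]
    exact ((F ^ i) e2).adj
  have hc_gap2 : ∀ i : ℕ, c (i+2) ≠ c i := by
    intro i h
    apply no_gap2 E hmin ((F ^ i) e2)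
    show (F (F ((F ^ i) e2))).fst = _
    rw [← hsucc i, ← hsucc (i+1)]
    exact h
  have hcm : (F ^ m) e2 = e2 := pow_fM_apply E e2
  have hc1x : c 1 = x := by rw [hc_snd 0]; rfl
  -- the facial walk of the second face
  have hrest_fst : (F e2).fst = x := fst_fP E e2
  have hrest_lst : ((F ^ (m-1)) (F e2)).fst = y := by
    rw [hsucc1, Nat.sub_add_cancel hm1, hcm]
    exact hc0f
  set rest := (fWalk E (F e2) (m-1)).copy hrest_fst hrest_lst with hrest
  have hrest_len : rest.length = m - 1 := by
    rw [hrest, SimpleGraph.Walk.length_copy, fWalk_length]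
  have hrest_darts : ∀ g : G.Dart, g ∈ rest.darts → ∃ i, 0 < i ∧ i < m ∧ (F ^ i) e2 = g := by
    intro g hg
    rw [hrest, SimpleGraph.Walk.darts_copy, fWalk_darts, List.mem_map] at hg
    obtain ⟨i, hi, rfl⟩ := hg
    rw [List.mem_range] at hi
    exact ⟨i + 1, Nat.succ_pos i, by omega, (hsucc1 i).symm⟩
  have hxy_rest : s(x, y) ∉ rest.edges := by
    intro hmem
    rw [mem_edges_iff] at hmem
    obtain ⟨g, hg, hge⟩ := hmem
    obtain ⟨i, hi0, him, hgi⟩ := hrest_darts g hg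
    have hge1 : g.edge = e1.edge := hge
    rw [SimpleGraph.dart_edge_eq_iff] at hge1
    rcases hge1 with rfl | rfl
    · exact no_common i 0 (by rw [hgi]; rfl)
    · have := fM_injOn E e2 him hm1 (by rw [hgi]; rfl)
      omega
  set p := rest.bypass with hpdef
  have hp : p.IsPath := SimpleGraph.Walk.bypass_isPath rest
  have hpe : p.edges ⊆ rest.edges := SimpleGraph.Walk.edges_bypass_subset rest
  have hpl : p.length ≤ m - 1 := (SimpleGraph.Walk.length_bypass_le rest).trans hrest_len.le
  have hxyp : s(x, y) ∉ p.edges := fun h => hxy_rest (hpe h)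
  have hyx : G.Adj y x := hxy.symm
  set C := SimpleGraph.Walk.cons hyx p with hC
  have hCcyc : C.IsCycle := by
    rw [hC, SimpleGraph.Walk.cons_isCycle_iff]
    exact ⟨hp, by rwa [Sym2.eq_swap]⟩
  set l := p.length + 1 with hldef
  have hCl : C.length = l := by rw [hC, SimpleGraph.Walk.length_cons]
  have hl3 : 3 ≤ l := by rw [← hCl]; exact hCcyc.three_le_length
  have hlm : l ≤ m := by omega
  have hl4 : l ≠ 4 := fun h => h4 y C hCcyc (by omega)
  have hl7 : l ≠ 7 := fun h => h7 y C hCcyc (by omega)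
  have hl9 : l ≠ 9 := fun h => h9 y C hCcyc (by omega)
  set T := cons hxy (cons hyz (cons hzx nil)) with hT
  have hTcyc : T.IsCycle := triangle_isCycle hxy hyz hzx
  have hTlen : T.length = 3 := rfl
  have hTsupp : T.support = [x, y, z, x] := rfl
  have hTedges : T.edges = [s(x,y), s(y,z), s(z,x)] := rfl
  by_cases hzp : z ∈ p.support
  · -- z is on the extracted cycle
    have hzy : G.Adj z y := hyz.symm
    have hxz' : G.Adj x z := hzx.symm
    set p1 := p.takeUntil z hzp with hp1def
    set p2 := p.dropUntil z hzp with hp2def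
    have hspec : p1.append p2 = p := p.take_spec hzp
    have hp1 : p1.IsPath := hp.takeUntil hzp
    have hp2 : p2.IsPath := hp.dropUntil hzp
    set a := p1.length with hadef
    set b := p2.length with hbdef
    have hab : a + b = p.length := by
      rw [hadef, hbdef, ← SimpleGraph.Walk.length_append, hspec]
    have hsupp_eq : p.support = p1.support ++ p2.support.tail := by
      conv_lhs => rw [← hspec]
      rw [SimpleGraph.Walk.support_append]
    have hnodup : (p1.support ++ p2.support.tail).Nodup := by
      rw [← hsupp_eq]; exact hp.2
    have hdisj2 := (List.nodup_append.1 hnodup).2.2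
    have hy1 : y ∉ p1.support := by
      intro hy'
      have hy2 : y ∈ p2.support.tail := by
        have h1 : y ∈ p2.support := p2.end_mem_support
        rw [p2.support_eq_cons] at h1
        rcases List.mem_cons.1 h1 with h | h
        · exact absurd h (fun hh => hyz.ne' hh.symm)
        · exact h
      exact hdisj2 y hy' y hy2 rfl
    have hx2 : x ∉ p2.support := by
      intro hx'
      have hx3 : x ∈ p2.support.tail := by
        rw [p2.support_eq_cons] at hx'
        rcases List.mem_cons.1 hx' with h | h
        · exact absurd h hxz
        · exact h
      exact hdisj2 x p1.start_mem_support x hx3 rfl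
    have ha1 : 1 ≤ a := by
      by_contra h
      push_neg at h
      exact hxz (p1.eq_of_length_eq_zero (by omega))
    have hb1 : 1 ≤ b := by
      by_contra h
      push_neg at h
      exact hyz.ne' (p2.eq_of_length_eq_zero (by omega))
    -- cycle D1 : y -> z -(rev p1)- x -> y  of length a+2
    set q1 := (SimpleGraph.Walk.cons hyx p1).reverse with hq1
    set D1 := SimpleGraph.Walk.cons hyz q1 with hD1
    have hD1cyc : D1.IsCycle := by
      rw [hD1, SimpleGraph.Walk.cons_isCycle_iff]
      constructor
      · rw [hq1, SimpleGraph.Walk.isPath_reverse_iff, SimpleGraph.Walk.cons_isPath_iff]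
        exact ⟨hp1, hy1⟩
      · rw [hq1, SimpleGraph.Walk.edges_reverse, List.mem_reverse,
          SimpleGraph.Walk.edges_cons]
        simp only [List.mem_cons]
        rintro (h | h)
        · rw [Sym2.eq_iff] at h
          rcases h with ⟨-, h⟩ | ⟨h, -⟩
          · exact hxz h.symm
          · exact hxy.ne h.symm
        · exact hy1 (p1.fst_mem_support_of_mem_edges h)
    have hD1len : D1.length = a + 2 := by
      rw [hD1, SimpleGraph.Walk.length_cons, hq1, SimpleGraph.Walk.length_reverse,
        SimpleGraph.Walk.length_cons]
    have haN1 : a ≠ 2 := fun h => h4 y D1 hD1cyc (by omega)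
    have haN2 : a ≠ 5 := fun h => h7 y D1 hD1cyc (by omega)
    have haN3 : a ≠ 7 := fun h => h9 y D1 hD1cyc (by omega)
    -- cycle D2 : x -> z -(p2)- y -> x of length b+2
    set q2 := (SimpleGraph.Walk.cons hxy p2.reverse).reverse with hq2
    set D2 := SimpleGraph.Walk.cons hxz' q2 with hD2
    have hD2cyc : D2.IsCycle := by
      rw [hD2, SimpleGraph.Walk.cons_isCycle_iff]
      constructor
      · rw [hq2, SimpleGraph.Walk.isPath_reverse_iff, SimpleGraph.Walk.cons_isPath_iff,
          SimpleGraph.Walk.isPath_reverse_iff]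
        refine ⟨hp2, ?_⟩
        rwa [SimpleGraph.Walk.support_reverse, List.mem_reverse]
      · rw [hq2, SimpleGraph.Walk.edges_reverse, List.mem_reverse,
          SimpleGraph.Walk.edges_cons]
        simp only [List.mem_cons]
        rintro (h | h)
        · rw [Sym2.eq_iff] at h
          rcases h with ⟨-, h⟩ | ⟨h, -⟩
          · exact hyz.ne h.symm
          · exact hxy.ne h
        · rw [SimpleGraph.Walk.edges_reverse, List.mem_reverse] at h
          exact hx2 (p2.fst_mem_support_of_mem_edges h)
    have hD2len : D2.length = b + 2 := by
      rw [hD2, SimpleGraph.Walk.length_cons, hq2, SimpleGraph.Walk.length_reverse,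
        SimpleGraph.Walk.length_cons, SimpleGraph.Walk.length_reverse]
    have hbN1 : b ≠ 2 := fun h => h4 x D2 hD2cyc (by omega)
    have hbN2 : b ≠ 5 := fun h => h7 x D2 hD2cyc (by omega)
    have hbN3 : b ≠ 7 := fun h => h9 x D2 hD2cyc (by omega)
    -- closing the pieces with the chords zx, yz when they are long enough
    have haE : 2 ≤ a → a ≠ 3 ∧ a ≠ 6 ∧ a ≠ 8 := by
      intro ha2
      have hE1edge : s(z, x) ∉ p1.edges := by
        intro h
        have := path_edge_ends p1 hp1 (by rwa [Sym2.eq_swap] at h)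
        omega
      have hE1cyc : (SimpleGraph.Walk.cons hzx p1).IsCycle := by
        rw [SimpleGraph.Walk.cons_isCycle_iff]
        exact ⟨hp1, hE1edge⟩
      have hE1len : (SimpleGraph.Walk.cons hzx p1).length = a + 1 :=
        SimpleGraph.Walk.length_cons _ _
      exact ⟨fun h => h4 z _ hE1cyc (by omega), fun h => h7 z _ hE1cyc (by omega),
        fun h => h9 z _ hE1cyc (by omega)⟩
    have hbE : 2 ≤ b → b ≠ 3 ∧ b ≠ 6 ∧ b ≠ 8 := by
      intro hb2
      have hE2edge : s(y, z) ∉ p2.edges := by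
        intro h
        have := path_edge_ends p2 hp2 (by rwa [Sym2.eq_swap] at h)
        omega
      have hE2cyc : (SimpleGraph.Walk.cons hyz p2).IsCycle := by
        rw [SimpleGraph.Walk.cons_isCycle_iff]
        exact ⟨hp2, hE2edge⟩
      have hE2len : (SimpleGraph.Walk.cons hyz p2).length = b + 1 :=
        SimpleGraph.Walk.length_cons _ _
      exact ⟨fun h => h4 y _ hE2cyc (by omega), fun h => h7 y _ hE2cyc (by omega),
        fun h => h9 y _ hE2cyc (by omega)⟩
    have ha14 : a = 1 ∨ a = 4 := by
      rcases Nat.lt_or_ge a 2 with h | h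
      · left; omega
      · have := haE h; omega
    have hb14 : b = 1 ∨ b = 4 := by
      rcases Nat.lt_or_ge b 2 with h | h
      · left; omega
      · have := hbE h; omega
    rcases ha14 with ha' | ha' <;> rcases hb14 with hb' | hb'
    · -- a = 1, b = 1: the (1,1) positional endgame
      -- the second face contains the darts (x,z) and (z,y)
      have hA2e : A2.symm.edge = s(x, z) := by
        rw [SimpleGraph.Dart.edge_symm]
        show s(A2.fst, A2.snd) = s(x, z)
        rw [hA2f, hA2s, Sym2.eq_swap]
      have hA1e : A1.symm.edge = s(z, y) := by
        rw [SimpleGraph.Dart.edge_symm]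
        show s(A1.fst, A1.snd) = s(z, y)
        rw [hA1f, Sym2.eq_swap]
      have hxz_rest : s(x, z) ∈ rest.edges :=
        hpe (SimpleGraph.Walk.edges_takeUntil_subset p hzp
          (edge_mem_of_length_one p1 (by omega)))
      have hzy_rest : s(z, y) ∈ rest.edges :=
        hpe (SimpleGraph.Walk.edges_dropUntil_subset p hzp
          (edge_mem_of_length_one p2 (by omega)))
      obtain ⟨g1, hg1d, hg1e⟩ := (mem_edges_iff rest _).1 hxz_rest
      obtain ⟨j, hj0, hjm, hgj⟩ := hrest_darts g1 hg1d
      obtain ⟨g2, hg2d, hg2e⟩ := (mem_edges_iff rest _).1 hzy_rest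
      obtain ⟨k, hk0, hkm, hgk⟩ := hrest_darts g2 hg2d
      have hj : (F ^ j) e2 = A2.symm := by
        rcases (SimpleGraph.dart_edge_eq_iff g1 A2.symm).1 (hg1e.trans hA2e.symm) with h | h
        · rw [hgj, h]
        · rw [SimpleGraph.Dart.symm_symm] at h
          exact absurd (by rw [hgj, h, ← hpow2]) (no_common j 2)
      have hk : (F ^ k) e2 = A1.symm := by
        rcases (SimpleGraph.dart_edge_eq_iff g2 A1.symm).1 (hg2e.trans hA1e.symm) with h | h
        · rw [hgk, h]
        · rw [SimpleGraph.Dart.symm_symm] at h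
          have hpow1 : (F ^ 1) e1 = A1 := by rw [pow_one]
          exact absurd (by rw [hgk, h, ← hpow1]) (no_common k 1)
      have hjk : j ≠ k := by
        intro h
        rw [h, hk] at hj
        apply hxz
        rw [← hA2s, hz]
        have h2 : A1 = A2 := by
          have h3 := congrArg SimpleGraph.Dart.symm hj
          rwa [SimpleGraph.Dart.symm_symm, SimpleGraph.Dart.symm_symm] at h3
        exact congrArg (fun d : G.Dart => d.snd) h2.symm
      -- positions of the boundary vertices
      have hcj : c j = x := by show ((F ^ j) e2).fst = x; rw [hj]; exact hA2s
      have hcj1 : c (j+1) = z := by rw [hc_snd j, hj]; exact hA2f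
      have hck : c k = z := by show ((F ^ k) e2).fst = z; rw [hk]; exact hz.symm
      have hck1 : c (k+1) = y := by rw [hc_snd k, hk]; exact hA1f
      have hcm' : c m = y := by show ((F ^ m) e2).fst = y; rw [hcm]; exact hc0f
      have hc0' : c 0 = y := hc0f
      rcases hjk.lt_or_gt with hjk' | hjk'
      · -- j < k
        have hja : j ≠ 1 := by
          intro h
          apply pinch1
          rw [← hj, h, pow_one]
        have hjb : j ≠ 2 := by
          intro h
          have h2 := hc_adj 1
          rw [hc1x, show c 2 = x by rw [← h]; exact hcj] at h2
          exact h2.ne rfl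
        have hjc : j ≠ 3 := by
          intro h
          apply hc_gap2 1
          show c 3 = c 1
          rw [hc1x, ← h]
          exact hcj
        have hka : k ≠ j + 1 := by
          intro h
          apply pinch2
          rw [← hk, h, hsucc j, hj]
        have hkb : k ≠ j + 2 := by
          intro h
          have h2 := hc_adj (j+1)
          rw [hcj1, show c (j+2) = z by rw [← h]; exact hck] at h2
          exact h2.ne rfl
        have hkc : k ≠ j + 3 := by
          intro h
          apply hc_gap2 (j+1)
          show c (j+3) = c (j+1)
          rw [hcj1, ← h]
          exact hck
        have hma : m ≠ k + 1 := by
          intro h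
          apply pinch3
          rw [← hk, ← hsucc k, ← h, hcm]
        have hmb : m ≠ k + 2 := by
          intro h
          have h2 := hc_adj (k+1)
          rw [hck1, show c (k+2) = y by rw [← h]; exact hcm'] at h2
          exact h2.ne rfl
        have hmc : m ≠ k + 3 := by
          intro h
          apply hc_gap2 (k+1)
          show c (k+3) = c (k+1)
          rw [hck1, ← h]
          exact hcm'
        omega
      · -- k < j
        have hka : k ≠ 1 := by
          intro h
          apply hxz
          rw [← hc1x, ← h]
          exact hck
        have hkb : k ≠ 2 := by
          intro h
          apply pinch1
          apply SimpleGraph.Dart.ext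
          apply Prod.ext
          · show (F e2).fst = A2.snd
            rw [hrest_fst, hA2s]
          · show (F e2).snd = A2.fst
            have h2 : c 2 = z := by rw [← h]; exact hck
            rw [hc_snd 1, pow_one] at h2
            rw [h2, hA2f]
        have hja : j ≠ k + 1 := by
          intro h
          apply hxy.ne
          rw [← hcj, h, hck1]
        have hjb : j ≠ k + 2 := by
          intro h
          have hde : (F ^ (k+1)) e2 = e2 := by
            apply SimpleGraph.Dart.ext
            apply Prod.ext
            · show c (k+1) = e2.fst
              rw [hck1]; rfl
            · show ((F ^ (k+1)) e2).snd = e2.snd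
              rw [← hc_snd (k+1), show k+1+1 = k+2 from rfl, ← h, hcj]
              rfl
          have := fM_injOn E e2 (show k+1 < m by omega) (show 0 < m by omega)
            (by rw [hde, pow_zero, Equiv.Perm.one_apply])
          omega
        have hma : m ≠ j + 1 := by
          intro h
          apply hyz.ne'
          rw [← hcj1, ← h, hcm']
        have hmb : m ≠ j + 2 := by
          intro h
          have hde : (F ^ (j+1)) e2 = A1.symm := by
            apply SimpleGraph.Dart.ext
            apply Prod.ext
            · show c (j+1) = A1.snd
              rw [hcj1]
            · show ((F ^ (j+1)) e2).snd = A1.fst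
              rw [← hc_snd (j+1), show j+1+1 = j+2 from rfl, ← h, hcm', hA1f]
          have := fM_injOn E e2 (show j+1 < m by omega) hkm (by rw [hde, hk])
          omega
        have hk3 : k = 3 := by omega
        have hj6 : j = 6 := by omega
        have hxa : G.Adj x (c 2) := by
          have h2 := hc_adj 1
          rwa [hc1x] at h2
        have haz : G.Adj (c 2) z := by
          have h2 := hc_adj 2
          rwa [show c 3 = z by rw [← hk3]; exact hck] at h2
        have hay : c 2 ≠ y := by
          have h2 := hc_gap2 0
          rwa [hc0'] at h2
        exact h4 x (SimpleGraph.Walk.cons hxa (SimpleGraph.Walk.cons haz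
            (SimpleGraph.Walk.cons hzy (SimpleGraph.Walk.cons hyx SimpleGraph.Walk.nil))))
          (quad_isCycle hxa haz hzy hyx hxz hay) rfl
    · -- a = 1, b = 4 : triangle normally adjacent to the 5-cycle (cons hyz p2)
      have hE2edge : s(y, z) ∉ p2.edges := by
        intro h
        have := path_edge_ends p2 hp2 (by rwa [Sym2.eq_swap] at h)
        omega
      have hE2cyc : (SimpleGraph.Walk.cons hyz p2).IsCycle := by
        rw [SimpleGraph.Walk.cons_isCycle_iff]
        exact ⟨hp2, hE2edge⟩
      refine h53 y x _ T hE2cyc (by rw [SimpleGraph.Walk.length_cons]; omega) hTcyc hTlen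
        ⟨y, z, hyz.ne, ?_, ?_, ?_⟩
      · rw [SimpleGraph.Walk.edges_cons]
        exact List.mem_cons_self
      · rw [hTedges]; simp
      · intro w
        rw [SimpleGraph.Walk.support_cons, hTsupp]
        simp only [List.mem_cons, List.not_mem_nil, or_false]
        constructor
        · rintro ⟨hw1, rfl | rfl | rfl | rfl⟩
          · rcases hw1 with h | h
            · exact absurd h hxy.ne
            · exact absurd h hx2
          · exact Or.inl rfl
          · exact Or.inr rfl
          · rcases hw1 with h | h
            · exact absurd h hxy.ne
            · exact absurd h hx2
        · rintro (rfl | rfl)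
          · exact ⟨Or.inl rfl, Or.inr (Or.inl rfl)⟩
          · exact ⟨Or.inr p2.start_mem_support, Or.inr (Or.inr (Or.inl rfl))⟩
    · -- a = 4, b = 1 : triangle normally adjacent to the 5-cycle (cons hzx p1)
      have hE1edge : s(z, x) ∉ p1.edges := by
        intro h
        have := path_edge_ends p1 hp1 (by rwa [Sym2.eq_swap] at h)
        omega
      have hE1cyc : (SimpleGraph.Walk.cons hzx p1).IsCycle := by
        rw [SimpleGraph.Walk.cons_isCycle_iff]
        exact ⟨hp1, hE1edge⟩
      refine h53 z x _ T hE1cyc (by rw [SimpleGraph.Walk.length_cons]; omega) hTcyc hTlen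
        ⟨z, x, fun h => hxz h.symm, ?_, ?_, ?_⟩
      · rw [SimpleGraph.Walk.edges_cons]
        exact List.mem_cons_self
      · rw [hTedges]; simp
      · intro w
        rw [SimpleGraph.Walk.support_cons, hTsupp]
        simp only [List.mem_cons, List.not_mem_nil, or_false]
        constructor
        · rintro ⟨hw1, rfl | rfl | rfl | rfl⟩
          · exact Or.inr rfl
          · rcases hw1 with h | h
            · exact absurd h hyz.ne
            · exact absurd h hy1
          · exact Or.inl rfl
          · exact Or.inr rfl
        · rintro (rfl | rfl)
          · exact ⟨Or.inl rfl, Or.inr (Or.inr (Or.inl rfl))⟩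
          · exact ⟨Or.inr p1.start_mem_support, Or.inl rfl⟩
    · omega
  · -- z not on the extracted cycle
    have hzy : G.Adj z y := hyz.symm
    set inner := SimpleGraph.Walk.cons hzy p.reverse with hinner
    set q := inner.reverse with hq
    have hq_path : q.IsPath := by
      rw [hq, SimpleGraph.Walk.isPath_reverse_iff, hinner, SimpleGraph.Walk.cons_isPath_iff]
      refine ⟨(SimpleGraph.Walk.isPath_reverse_iff p).2 hp, ?_⟩
      rwa [SimpleGraph.Walk.support_reverse, List.mem_reverse]
    have hq_edges : s(z, x) ∉ q.edges := by
      rw [hq, SimpleGraph.Walk.edges_reverse, List.mem_reverse, hinner,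
        SimpleGraph.Walk.edges_cons]
      simp only [List.mem_cons]
      rintro (h | h)
      · rw [Sym2.eq_iff] at h
        rcases h with ⟨-, h⟩ | ⟨h, -⟩
        · exact hxy.ne h
        · exact hyz.ne' h
      · rw [SimpleGraph.Walk.edges_reverse, List.mem_reverse] at h
        exact hzp (p.fst_mem_support_of_mem_edges h)
    set C' := SimpleGraph.Walk.cons hzx q with hC'
    have hC'cyc : C'.IsCycle := by
      rw [hC', SimpleGraph.Walk.cons_isCycle_iff]
      exact ⟨hq_path, hq_edges⟩
    have hC'len : C'.length = l + 1 := by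
      rw [hC', SimpleGraph.Walk.length_cons, hq, SimpleGraph.Walk.length_reverse, hinner,
        SimpleGraph.Walk.length_cons, SimpleGraph.Walk.length_reverse]
    have hlcases : l = 3 ∨ l = 5 ∨ l = 6 ∨ l = 8 := by omega
    rcases hlcases with hlv | hlv | hlv | hlv
    · exact h4 z C' hC'cyc (by omega)
    · refine h53 y x C T hCcyc (by omega) hTcyc hTlen ⟨x, y, hxy.ne, ?_, ?_, ?_⟩
      · rw [hC, SimpleGraph.Walk.edges_cons, Sym2.eq_swap]
        exact List.mem_cons_self
      · rw [hTedges]; simp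
      · intro w
        rw [hC, SimpleGraph.Walk.support_cons, hTsupp]
        simp only [List.mem_cons, List.not_mem_nil, or_false]
        constructor
        · rintro ⟨hw1, rfl | rfl | rfl | rfl⟩
          · exact Or.inl rfl
          · exact Or.inr rfl
          · rcases hw1 with h | h
            · exact absurd h hyz.ne'
            · exact absurd h hzp
          · exact Or.inl rfl
        · rintro (rfl | rfl)
          · exact ⟨Or.inr p.start_mem_support, Or.inl rfl⟩
          · exact ⟨Or.inl rfl, Or.inr (Or.inl rfl)⟩
    · exact h7 z C' hC'cyc (by omega)
    · exact h9 z C' hC'cyc (by omega)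

end Aux





/-- Every face adjacent to a 3-face has boundary walk of length at least 10. -/
theorem statement15 {V : Type*} [Fintype V] (G : SimpleGraph V) [DecidableRel G.Adj]
    (hconn : G.Connected)
    (E : Paper.PlaneEmbedding G) (hE : E.IsPlane)
    (hmin : ∀ v : V, 3 ≤ G.degree v)
    (h4 : Paper.NoCycleLen G 4) (h7 : Paper.NoCycleLen G 7)
    (h9 : Paper.NoCycleLen G 9) (h53 : Paper.No5CycleNormAdj3 G) :
    ∀ d1 d2 : G.Dart, Paper.faceSize E d1 = 3 → ¬ E.facePerm.SameCycle d1 d2 →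
      Paper.FacesAdjacent E d1 d2 → 10 ≤ Paper.faceSize E d2 := by
  classical
  intro d1 d2 h3 hnsc hadj
  by_contra hlt
  push_neg at hlt
  obtain ⟨e1, e2, hc1, hc2, hedge⟩ := hadj
  have hne : e1 ≠ e2 := fun h => hnsc (hc1.trans (h ▸ hc2).symm)
  have he2 : e2 = e1.symm := by
    rcases (SimpleGraph.dart_edge_eq_iff e1 e2).1 hedge with h | h
    · exact absurd h hne
    · rw [h, SimpleGraph.Dart.symm_symm]
  have h3' : fM E e1 = 3 := by
    rw [← faceSize_eq_fM, ← faceSize_congr E hc1]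
    exact h3
  have hdisj : ¬ E.facePerm.SameCycle e1 e1.symm := by
    rw [← he2]
    intro h
    exact hnsc (hc1.trans (h.trans hc2.symm))
  have hm : fM E e1.symm ≤ 9 := by
    rw [← he2, ← faceSize_eq_fM, ← faceSize_congr E hc2]
    omega
  exact (engine E hmin h4 h7 h9 h53 e1 h3' hdisj hm).elim
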